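/- Direct subordinate reduction effect: let (i₀,j₀) be an arc of the circuit-free digraph Γ with δ⁻(j₀) ≥ 2, and suppose i₀ is not a predecessor in Γ of any other immediate predecessor of j₀ (i₀ ∉ IC(i₀,j₀)). If v is superadditive, then AF_{i₀}(N,v,Γ) ≥ AF_{i₀}(N,v,Γ−(i₀,j₀)). -/

import Mathlib

open scoped Classical
open Finset

section Preamble

variable {V : Type*} [Fintype V] [DecidableEq V]

/-- Adjacency relation of a digraph given by its arc set. -/
def Adj (A : Finset (V × V)) (i j : V) : Prop := (i, j) ∈ A

/-- A digraph is circuit-free if it contains no directed cycle. -/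
def CircuitFree (A : Finset (V × V)) : Prop :=
  ∀ i : V, ¬ Relation.TransGen (Adj A) i i

/-- In-degree of a node. -/
def inDeg (A : Finset (V × V)) (j : V) : ℕ :=
  (A.filter (fun a => a.2 = j)).card

/-- Weak connectivity (chains, ignoring orientation). -/
def WConn (A : Finset (V × V)) (i j : V) : Prop :=
  Relation.ReflTransGen (fun a b => (a, b) ∈ A ∨ (b, a) ∈ A) i j

/-- The weakly connected component of `i`, as a finset. -/
noncomputable def compF (A : Finset (V × V)) (i : V) : Finset V :=
  Finset.univ.filter (fun j => WConn A i j)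

/-- `IsPath A p` : `p` is a (nonempty) directed path along arcs of `A`. -/
def IsPath (A : Finset (V × V)) : List V → Prop
  | [] => False
  | [_] => True
  | i :: j :: l => (i, j) ∈ A ∧ IsPath A (j :: l)

/-- The digraph `A` restricted to the node set `K` is an arborescence:
there is a root `r ∈ K` with a unique directed path from `r` to every node of `K`. -/
def IsArbOn (A : Finset (V × V)) (K : Set V) : Prop :=
  ∃ r ∈ K, ∀ i ∈ K, ∃! p : List V,
    IsPath A p ∧ p.head? = some r ∧ p.getLast? = some i

/-- A forest: every weakly connected component is an arborescence. -/
def IsForest (A : Finset (V × V)) : Prop :=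
  ∀ i : V, IsArbOn A {j | WConn A i j}

/-- `F` is a maximal spanning forest of the digraph `A`. -/
def IsMaxSpanningForest (A F : Finset (V × V)) : Prop :=
  F ⊆ A ∧ IsForest F ∧ ∀ a ∈ A, a ∉ F → ¬ IsForest (insert a F)

/-- The collection of all maximal spanning forests of `A`. -/
noncomputable def maxForests (A : Finset (V × V)) : Finset (Finset (V × V)) :=
  A.powerset.filter (fun F => IsMaxSpanningForest A F)

/-- `S̄_F(i)` : the node `i` together with all its successors in `F`. -/
noncomputable def succSet (F : Finset (V × V)) (i : V) : Finset V :=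
  Finset.univ.filter (fun j => Relation.ReflTransGen (Adj F) i j)

/-- `Ŝ_F(i)` : the immediate successors of `i` in `F`. -/
noncomputable def immSucc (F : Finset (V × V)) (i : V) : Finset V :=
  Finset.univ.filter (fun j => (i, j) ∈ F)

/-- Marginal contribution of player `i` with respect to the forest `F`. -/
noncomputable def marg (v : Finset V → ℝ) (F : Finset (V × V)) (i : V) : ℝ :=
  v (succSet F i) - ∑ j ∈ immSucc F i, v (succSet F j)

/-- The Average Forest leadership measure. -/
noncomputable def AF (v : Finset V → ℝ) (A : Finset (V × V)) (i : V) : ℝ :=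
  (∑ F ∈ maxForests A, marg v F i) / (maxForests A).card

/-- The node sets of the arborescence components of a forest `F`. -/
noncomputable def comps (F : Finset (V × V)) : Finset (Finset V) :=
  Finset.univ.image (fun i => compF F i)

/-- Productivity of the organisational situation. -/
noncomputable def Productivity (v : Finset V → ℝ) (A : Finset (V × V)) : ℝ :=
  (∑ F ∈ maxForests A, ∑ K ∈ comps F, v K) / (maxForests A).card

/-- Superadditivity of a TU game. -/
def Superadditive (v : Finset V → ℝ) : Prop :=
  ∀ S Q : Finset V, Disjoint S Q → v S + v Q ≤ v (S ∪ Q)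

/-- Weak connectedness of the digraph. -/
def WeaklyConnected (A : Finset (V × V)) : Prop :=
  ∀ i j : V, WConn A i j

/-- Quasi-strong connectedness: existence of a root reaching every node. -/
def HasRoot (A : Finset (V × V)) : Prop :=
  ∃ r : V, ∀ i : V, Relation.ReflTransGen (Adj A) r i

end Preamble

section Dev
set_option linter.unusedSectionVars false

variable {V : Type*} [Fintype V] [DecidableEq V]

/-- Every node has at most one parent. -/
def Deg1 (G : Finset (V × V)) : Prop :=
  ∀ ⦃a b j : V⦄, (a, j) ∈ G → (b, j) ∈ G → a = b

/-- No directed cycles. -/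
def Acyc (G : Finset (V × V)) : Prop :=
  ∀ i : V, ¬ Relation.TransGen (Adj G) i i

lemma IsPath.ne_nil {G : Finset (V × V)} {p : List V} (h : IsPath G p) : p ≠ [] := by
  cases p with
  | nil => exact absurd h (by simp [IsPath])
  | cons a l => simp

lemma isPath_snoc {G : Finset (V × V)} : ∀ {p : List V} {a b : V},
    IsPath G p → p.getLast? = some a → (a, b) ∈ G → IsPath G (p ++ [b])
  | [], a, b, h, _, _ => absurd h (by simp [IsPath])
  | [x], a, b, h, hl, hab => by
      simp only [List.getLast?_singleton, Option.some_inj] at hl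
      subst hl
      exact ⟨hab, trivial⟩
  | x :: y :: l, a, b, h, hl, hab => by
      obtain ⟨hxy, htl⟩ := h
      have hl' : (y :: l).getLast? = some a := by
        rw [← hl]; simp [List.getLast?_cons_cons]
      exact ⟨hxy, isPath_snoc htl hl' hab⟩

lemma head?_append_singleton {p : List V} {b : V} (hp : p ≠ []) :
    (p ++ [b]).head? = p.head? := by
  cases p with
  | nil => simp at hp
  | cons x l => simp

lemma exists_path_of_rtg {G : Finset (V × V)} {s t : V}
    (h : Relation.ReflTransGen (Adj G) s t) :
    ∃ p : List V, IsPath G p ∧ p.head? = some s ∧ p.getLast? = some t := by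
  induction h with
  | refl => exact ⟨[s], trivial, rfl, rfl⟩
  | tail h step ih =>
      obtain ⟨p, hp, hph, hpl⟩ := ih
      refine ⟨p ++ [_], isPath_snoc hp hpl step, ?_, List.getLast?_concat⟩
      rw [head?_append_singleton hp.ne_nil, hph]

lemma rtg_of_path {G : Finset (V × V)} : ∀ {p : List V} {s t : V},
    IsPath G p → p.head? = some s → p.getLast? = some t →
    Relation.ReflTransGen (Adj G) s t
  | [], s, t, h, _, _ => absurd h (by simp [IsPath])
  | [x], s, t, _, hh, hl => by
      simp only [List.head?_cons, Option.some_inj] at hh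
      simp only [List.getLast?_singleton, Option.some_inj] at hl
      subst hh; subst hl; exact Relation.ReflTransGen.refl
  | x :: y :: l, s, t, h, hh, hl => by
      obtain ⟨hxy, htl⟩ := h
      simp only [List.head?_cons, Option.some_inj] at hh
      subst hh
      have hl' : (y :: l).getLast? = some t := by
        rw [← hl]; simp [List.getLast?_cons_cons]
      exact Relation.ReflTransGen.head hxy (rtg_of_path htl rfl hl')

/-- snoc decomposition of a path of length ≥ 2. -/
lemma path_snoc_cases {G : Finset (V × V)} : ∀ {p : List V},
    IsPath G p → 2 ≤ p.length →
    ∃ (q : List V) (b c : V), p = q ++ [c] ∧ IsPath G q ∧ q.getLast? = some b ∧ (b, c) ∈ G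
  | [], h, _ => absurd h (by simp [IsPath])
  | [x], _, hlen => by simp at hlen
  | x :: y :: l, h, _ => by
      obtain ⟨hxy, htl⟩ := h
      cases l with
      | nil => exact ⟨[x], x, y, rfl, trivial, rfl, hxy⟩
      | cons z l' =>
          obtain ⟨q, b, c, heq, hq, hql, hbc⟩ := path_snoc_cases htl (by simp)
          have hqne : q ≠ [] := hq.ne_nil
          refine ⟨x :: q, b, c, by rw [List.cons_append, ← heq], ?_, ?_, hbc⟩
          · -- IsPath G (x :: q) : head of q is y
            have hqh : q.head? = some y := by
              have : (q ++ [c]).head? = some y := by rw [← heq]; rfl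
              rwa [head?_append_singleton hqne] at this
            cases q with
            | nil => simp at hqne
            | cons w q' =>
                simp only [List.head?_cons, Option.some_inj] at hqh
                subst hqh
                exact ⟨hxy, hq⟩
          · cases q with
            | nil => simp at hqne
            | cons w q' => rw [List.getLast?_cons_cons]; exact hql

/-- A closed path of length ≥ 2 yields a directed cycle. -/
lemma transGen_of_closed_path {G : Finset (V × V)} {p : List V} {s : V}
    (hp : IsPath G p) (hh : p.head? = some s) (hl : p.getLast? = some s)
    (hlen : 2 ≤ p.length) : Relation.TransGen (Adj G) s s := by
  cases p with
  | nil => exact absurd hp (by simp [IsPath])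
  | cons x l =>
      cases l with
      | nil => simp at hlen
      | cons y l' =>
          obtain ⟨hxy, htl⟩ := hp
          simp only [List.head?_cons, Option.some_inj] at hh
          subst hh
          have hl' : (y :: l').getLast? = some x := by
            rw [← hl]; simp [List.getLast?_cons_cons]
          exact Relation.TransGen.head' hxy (rtg_of_path htl rfl hl')

/-- Unique directed paths given unique parents and acyclicity. -/
lemma path_unique {G : Finset (V × V)} (hd : Deg1 G) (hac : Acyc G) :
    ∀ n : ℕ, ∀ p q : List V, p.length ≤ n →
    IsPath G p → IsPath G q → p.head? = q.head? → p.getLast? = q.getLast? → p = q := by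
  intro n
  induction n with
  | zero => intro p q hn hp _ _ _; exact absurd hp (by
      interval_cases h : p.length
      · simp [List.length_eq_zero_iff] at h; subst h; simp [IsPath])
  | succ n ih =>
      intro p q hn hp hq hh hl
      rcases Nat.lt_or_ge p.length 2 with h2 | h2
      · -- p is a singleton
        obtain ⟨x, rfl⟩ : ∃ x, p = [x] := by
          cases p with
          | nil => exact absurd hp (by simp [IsPath])
          | cons a l => cases l with
            | nil => exact ⟨a, rfl⟩
            | cons b l' => simp at h2
        rcases Nat.lt_or_ge q.length 2 with hq2 | hq2
        · obtain ⟨y, rfl⟩ : ∃ y, q = [y] := by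
            cases q with
            | nil => exact absurd hq (by simp [IsPath])
            | cons a l => cases l with
              | nil => exact ⟨a, rfl⟩
              | cons b l' => simp at hq2
          simp only [List.head?_cons, Option.some_inj] at hh
          rw [hh]
        · -- q closed path of length ≥ 2 at x : cycle
          exfalso
          refine hac x (transGen_of_closed_path hq ?_ ?_ hq2)
          · rw [← hh]; rfl
          · rw [← hl]; rfl
      · rcases Nat.lt_or_ge q.length 2 with hq2 | hq2
        · obtain ⟨y, rfl⟩ : ∃ y, q = [y] := by
            cases q with
            | nil => exact absurd hq (by simp [IsPath])
            | cons a l => cases l with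
              | nil => exact ⟨a, rfl⟩
              | cons b l' => simp at hq2
          exfalso
          refine hac y (transGen_of_closed_path hp ?_ ?_ h2)
          · rw [hh]; rfl
          · rw [hl]; rfl
        · obtain ⟨p', b, c, rfl, hp', hp'l, hbc⟩ := path_snoc_cases hp h2
          obtain ⟨q', b', c', rfl, hq', hq'l, hb'c'⟩ := path_snoc_cases hq hq2
          have hcc : c = c' := by
            have := hl
            rw [List.getLast?_concat, List.getLast?_concat] at this
            exact Option.some_inj.mp this
          subst hcc
          have hbb : b = b' := hd hbc hb'c'
          subst hbb
          have : p' = q' := by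
            refine ih p' q' ?_ hp' hq' ?_ (by rw [hp'l, hq'l])
            · have := hn; simp at this; omega
            · have := hh
              rwa [head?_append_singleton hp'.ne_nil,
                   head?_append_singleton hq'.ne_nil] at this
          rw [this]

/-- symmetric closure relation used by WConn. -/
lemma wconn_symm {G : Finset (V × V)} {i j : V} (h : WConn G i j) : WConn G j i :=
  by
    haveI : Std.Symm (fun a b : V => (a, b) ∈ G ∨ (b, a) ∈ G) := ⟨fun _ _ hab => hab.symm.imp id id⟩
    exact Relation.ReflTransGen.symmetric.symm _ _ h

lemma wconn_of_rtg {G : Finset (V × V)} {i j : V}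
    (h : Relation.ReflTransGen (Adj G) i j) : WConn G i j :=
  Relation.ReflTransGen.mono (fun _ _ hab => Or.inl hab) _ _ h

/-- In a forest every node has at most one parent. -/
lemma IsForest.deg1 {F : Finset (V × V)} (hF : IsForest F) : Deg1 F := by
  intro a b j hab hbj
  obtain ⟨r, hrmem, hpaths⟩ := hF j
  -- a and b are weakly connected to j
  have hja : WConn F j a := Relation.ReflTransGen.single (Or.inr hab)
  have hjb : WConn F j b := Relation.ReflTransGen.single (Or.inr hbj)
  obtain ⟨pa, ⟨hpa, hpah, hpal⟩, _⟩ := hpaths a hja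
  obtain ⟨pb, ⟨hpb, hpbh, hpbl⟩, _⟩ := hpaths b hjb
  obtain ⟨pj, hpjspec, hpjuniq⟩ := hpaths j Relation.ReflTransGen.refl
  have h1 : pa ++ [j] = pj := hpjuniq _ ⟨isPath_snoc hpa hpal hab,
    by rw [head?_append_singleton hpa.ne_nil]; exact hpah, List.getLast?_concat⟩
  have h2 : pb ++ [j] = pj := hpjuniq _ ⟨isPath_snoc hpb hpbl hbj,
    by rw [head?_append_singleton hpb.ne_nil]; exact hpbh, List.getLast?_concat⟩
  have hpq : pa = pb := by
    have := h1.trans h2.symm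
    exact List.append_cancel_right this
  rw [hpq, hpbl] at hpal
  exact (Option.some_inj.mp hpal).symm

/-- Every node has a parentless ancestor. -/
lemma exists_root {G : Finset (V × V)} (hac : Acyc G) (x : V) :
    ∃ r : V, Relation.ReflTransGen (Adj G) r x ∧ ∀ z, (z, r) ∉ G := by
  have : IsTrans V (Relation.TransGen (Adj G)) := ⟨fun _ _ _ => Relation.TransGen.trans⟩
  have : IsIrrefl V (Relation.TransGen (Adj G)) := ⟨hac⟩
  have hwf := Finite.wellFounded_of_trans_of_irrefl (Relation.TransGen (Adj G))
  obtain ⟨r, hr, hmin⟩ := hwf.has_min {y | Relation.ReflTransGen (Adj G) y x} ⟨x, .refl⟩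
  refine ⟨r, hr, fun z hz => ?_⟩
  exact hmin z (.head hz hr) (Relation.TransGen.single hz)

/-- Parentless ancestors are unique. -/
lemma root_unique {G : Finset (V × V)} (hd : Deg1 G) {r r' x : V}
    (hr : ∀ z, (z, r) ∉ G) (hr' : ∀ z, (z, r') ∉ G)
    (hrx : Relation.ReflTransGen (Adj G) r x) (hr'x : Relation.ReflTransGen (Adj G) r' x) :
    r = r' := by
  induction hrx with
  | refl =>
      rcases Relation.ReflTransGen.cases_tail hr'x with h | ⟨c, _, hc⟩
      · exact h
      · exact absurd hc (hr c)
  | tail h step ih =>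
      rcases Relation.ReflTransGen.cases_tail hr'x with h' | ⟨c, hrc, hc⟩
      · exact absurd (h' ▸ step) (hr' _)
      · exact ih (by rwa [hd hc step] at hrc)

/-- Nodes weakly connected share the same parentless ancestor. -/
lemma root_reaches_of_wconn {G : Finset (V × V)} (hd : Deg1 G) (hac : Acyc G)
    {r x y : V} (hr : ∀ z, (z, r) ∉ G) (hrx : Relation.ReflTransGen (Adj G) r x)
    (hxy : WConn G x y) : Relation.ReflTransGen (Adj G) r y := by
  induction hxy with
  | refl => exact hrx
  | tail h step ih =>
      rename_i b c
      rcases step with hbc | hcb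
      · exact ih.tail hbc
      · -- (c, b) ∈ G : r reaches b; the root of c also reaches b, roots coincide
        obtain ⟨r', hr'c, hr'⟩ := exists_root hac c
        have hr'b : Relation.ReflTransGen (Adj G) r' b := hr'c.tail hcb
        have : r = r' := root_unique hd hr hr' ih hr'b
        exact this ▸ hr'c

/-- Characterization: unique parents + acyclicity gives a forest. -/
lemma isForest_of_deg1_acyc {G : Finset (V × V)} (hd : Deg1 G) (hac : Acyc G) :
    IsForest G := by
  intro i
  obtain ⟨r, hri, hr⟩ := exists_root hac i
  refine ⟨r, wconn_symm (wconn_of_rtg hri), fun x hx => ?_⟩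
  have hrx : Relation.ReflTransGen (Adj G) r x :=
    root_reaches_of_wconn hd hac hr hri hx
  obtain ⟨p, hp, hph, hpl⟩ := exists_path_of_rtg hrx
  refine ⟨p, ⟨hp, hph, hpl⟩, fun q ⟨hq, hqh, hql⟩ => ?_⟩
  exact path_unique hd hac q.length q p le_rfl hq hp (by rw [hph, hqh]) (by rw [hpl, hql])

lemma acyc_of_subset {A G : Finset (V × V)} (hA : CircuitFree A) (h : G ⊆ A) : Acyc G :=
  fun i hi => hA i (Relation.TransGen.mono (fun _ _ hab => h hab) _ _ hi)

/-- Characterization of maximal spanning forests via in-arc covers. -/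
lemma maxSpanningForest_iff {A F : Finset (V × V)} (hA : CircuitFree A)
    (hFA : F ⊆ A) (hF : IsForest F) :
    IsMaxSpanningForest A F ↔ ∀ j x : V, (x, j) ∈ A → ∃ y, (y, j) ∈ F := by
  constructor
  · rintro ⟨-, -, hmax⟩ j x hxj
    by_contra hno
    push_neg at hno
    have hxjF : (x, j) ∉ F := hno x
    refine hmax (x, j) hxj hxjF (isForest_of_deg1_acyc ?_ ?_)
    · intro a b j' haj hbj
      rcases Finset.mem_insert.mp haj with h1 | h1 <;>
      rcases Finset.mem_insert.mp hbj with h2 | h2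
      · rw [Prod.mk.injEq] at h1 h2; exact h1.1.trans h2.1.symm
      · exfalso; rw [Prod.mk.injEq] at h1
        exact hno b (h1.2 ▸ h2)
      · exfalso; rw [Prod.mk.injEq] at h2
        exact hno a (h2.2 ▸ h1)
      · exact hF.deg1 h1 h2
    · exact acyc_of_subset hA (Finset.insert_subset hxj hFA)
  · intro hcov
    refine ⟨hFA, hF, fun a ha haF hins => ?_⟩
    obtain ⟨y, hy⟩ := hcov a.2 a.1 (by rwa [Prod.mk.eta])
    have h1 : (y, a.2) ∈ insert a F := Finset.mem_insert_of_mem hy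
    have h2 : (a.1, a.2) ∈ insert a F := by rw [Prod.mk.eta]; exact Finset.mem_insert_self _ _
    have : y = a.1 := hins.deg1 h1 h2
    subst this
    exact haF (by rwa [Prod.mk.eta] at hy)

/-- Any forest extends to a maximal spanning forest. -/
lemma exists_maxForest_extending {A : Finset (V × V)} :
    ∀ (n : ℕ) (F : Finset (V × V)), (A \ F).card ≤ n → F ⊆ A → IsForest F →
    ∃ M, M ∈ maxForests A ∧ F ⊆ M := by
  intro n
  induction n with
  | zero =>
      intro F hn hFA hF
      have : A \ F = ∅ := Finset.card_eq_zero.mp (Nat.le_zero.mp hn)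
      have hAF : A ⊆ F := fun a ha => by
        by_contra haF
        exact absurd (Finset.mem_sdiff.mpr ⟨ha, haF⟩) (this ▸ Finset.notMem_empty a)
      refine ⟨F, Finset.mem_filter.mpr ⟨Finset.mem_powerset.mpr hFA, hFA, hF,
        fun a ha haF _ => haF (hAF ha)⟩, le_refl F⟩
  | succ n ih =>
      intro F hn hFA hF
      by_cases hmax : ∀ a ∈ A, a ∉ F → ¬ IsForest (insert a F)
      · exact ⟨F, Finset.mem_filter.mpr ⟨Finset.mem_powerset.mpr hFA, hFA, hF, hmax⟩, le_refl F⟩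
      · push_neg at hmax
        obtain ⟨a, ha, haF, hins⟩ := hmax
        obtain ⟨M, hM, hFM⟩ := ih (insert a F) (by
          have : A \ insert a F ⊂ A \ F := by
            refine Finset.ssubset_iff_of_subset (Finset.sdiff_subset_sdiff le_rfl
              (Finset.subset_insert a F)) |>.mpr ?_
            exact ⟨a, Finset.mem_sdiff.mpr ⟨ha, haF⟩,
              fun h => (Finset.mem_sdiff.mp h).2 (Finset.mem_insert_self a F)⟩
          have := Finset.card_lt_card this
          omega) (Finset.insert_subset ha hFA) hins
        exact ⟨M, hM, (Finset.subset_insert a F).trans hFM⟩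

/-- If `s` cannot reach `a.1`, reachability from `s` ignores the inserted arc `a`. -/
lemma rtg_avoid {G : Finset (V × V)} {a : V × V} {s x : V}
    (hs : ¬ Relation.ReflTransGen (Adj (insert a G)) s a.1)
    (h : Relation.ReflTransGen (Adj (insert a G)) s x) :
    Relation.ReflTransGen (Adj G) s x := by
  induction h with
  | refl => exact .refl
  | tail hsy step ih =>
      rcases Finset.mem_insert.mp step with heq | hmem
      · exfalso
        have hy : _ = a.1 := congrArg Prod.fst heq
        exact hs (hy ▸ hsy)
      · exact ih.tail hmem

/-- Splitting reachability across an inserted arc. -/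
lemma rtg_split {G : Finset (V × V)} {a : V × V} {s x : V}
    (h : Relation.ReflTransGen (Adj (insert a G)) s x) :
    Relation.ReflTransGen (Adj G) s x ∨ Relation.ReflTransGen (Adj G) a.2 x := by
  induction h with
  | refl => exact Or.inl .refl
  | tail hsy step ih =>
      rcases Finset.mem_insert.mp step with heq | hmem
      · right
        have h2 : _ = a.2 := congrArg Prod.snd heq
        exact h2 ▸ .refl
      · rcases ih with h1 | h1
        · exact Or.inl (h1.tail hmem)
        · exact Or.inr (h1.tail hmem)

/-- In a `Deg1` digraph, two ancestors of a common node are comparable. -/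
lemma rtg_comparable {G : Finset (V × V)} (hd : Deg1 G) {p q x : V}
    (hp : Relation.ReflTransGen (Adj G) p x) (hq : Relation.ReflTransGen (Adj G) q x) :
    Relation.ReflTransGen (Adj G) p q ∨ Relation.ReflTransGen (Adj G) q p := by
  induction hp with
  | refl => exact Or.inr hq
  | tail hpy step ih =>
      rcases Relation.ReflTransGen.cases_tail hq with h | ⟨c, hqc, hc⟩
      · subst h; exact Or.inl (hpy.tail step)
      · exact ih (by rwa [hd hc step] at hqc)

lemma mem_maxForests_iff {A F : Finset (V × V)} :
    F ∈ maxForests A ↔ IsMaxSpanningForest A F := by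
  unfold maxForests
  simp only [Finset.mem_filter, Finset.mem_powerset]
  exact ⟨fun h => h.2, fun h => ⟨h.1, h⟩⟩

lemma maxF_subset {A F : Finset (V × V)} (h : F ∈ maxForests A) : F ⊆ A :=
  (mem_maxForests_iff.mp h).1

lemma maxF_forest {A F : Finset (V × V)} (h : F ∈ maxForests A) : IsForest F :=
  (mem_maxForests_iff.mp h).2.1

lemma maxF_cover {A F : Finset (V × V)} (hA : CircuitFree A) (h : F ∈ maxForests A)
    {x j : V} (hxj : (x, j) ∈ A) : ∃ y, (y, j) ∈ F :=
  (maxSpanningForest_iff hA (maxF_subset h) (maxF_forest h)).mp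
    (mem_maxForests_iff.mp h) j x hxj

/-- Swapping the in-arc of `j₀` preserves maximal spanning forests. -/
lemma swap_mem_maxForests {A F : Finset (V × V)} (hA : CircuitFree A)
    {a b j₀ : V} (hb : (b, j₀) ∈ A) (hF : F ∈ maxForests A)
    (hmem : (a, j₀) ∈ F) (hab : a ≠ b) :
    insert (b, j₀) (F.erase (a, j₀)) ∈ maxForests A := by
  set F' := insert (b, j₀) (F.erase (a, j₀)) with hF'
  have hd := (maxF_forest hF).deg1
  have hF'A : F' ⊆ A :=
    Finset.insert_subset hb ((Finset.erase_subset _ _).trans (maxF_subset hF))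
  have hd' : Deg1 F' := by
    intro x y j hx hy
    rcases Finset.mem_insert.mp hx with h1 | h1 <;>
    rcases Finset.mem_insert.mp hy with h2 | h2
    · rw [Prod.mk.injEq] at h1 h2; exact h1.1.trans h2.1.symm
    · exfalso
      obtain ⟨hxb, hj⟩ := Prod.mk.injEq .. ▸ h1
      subst hj
      have : y = a := hd (Finset.mem_of_mem_erase h2) hmem
      subst this
      exact (Finset.mem_erase.mp h2).1 rfl
    · exfalso
      obtain ⟨hyb, hj⟩ := Prod.mk.injEq .. ▸ h2
      subst hj
      have : x = a := hd (Finset.mem_of_mem_erase h1) hmem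
      subst this
      exact (Finset.mem_erase.mp h1).1 rfl
    · exact hd (Finset.mem_of_mem_erase h1) (Finset.mem_of_mem_erase h2)
  have hforest' : IsForest F' := isForest_of_deg1_acyc hd' (acyc_of_subset hA hF'A)
  rw [mem_maxForests_iff]
  rw [maxSpanningForest_iff hA hF'A hforest']
  intro j x hxj
  by_cases hj : j = j₀
  · subst hj; exact ⟨b, Finset.mem_insert_self _ _⟩
  · obtain ⟨y, hy⟩ := maxF_cover hA hF hxj
    refine ⟨y, Finset.mem_insert_of_mem (Finset.mem_erase.mpr ⟨?_, hy⟩)⟩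
    intro h
    exact hj (congrArg Prod.snd h)

lemma no_rtg_back {A F : Finset (V × V)} (hA : CircuitFree A) (hFA : F ⊆ A)
    {u w : V} (harc : (u, w) ∈ A) : ¬ Relation.ReflTransGen (Adj F) w u := by
  intro h
  exact hA w (Relation.TransGen.tail' (Relation.ReflTransGen.mono (fun _ _ hab => hFA hab) _ _ h) harc)

lemma deg1_subset {F G : Finset (V × V)} (h : G ⊆ F) (hd : Deg1 F) : Deg1 G :=
  fun _ _ _ h1 h2 => hd (h h1) (h h2)

lemma succSet_insert_eq {G : Finset (V × V)} {a : V × V} {s : V}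
    (hs : ¬ Relation.ReflTransGen (Adj (insert a G)) s a.1) :
    succSet (insert a G) s = succSet G s := by
  ext x
  simp only [succSet, Finset.mem_filter, Finset.mem_univ, true_and]
  exact ⟨fun h => rtg_avoid hs h,
    fun h => Relation.ReflTransGen.mono (fun _ _ hab => Finset.mem_insert_of_mem hab) _ _ h⟩

/-- The key comparison: replacing the parent `i₀` of `j₀` by `i` (which `i₀` cannot
reach) does not increase the marginal contribution of `i₀`. -/
lemma swap_marg_le {A F : Finset (V × V)} (hA : CircuitFree A) (hFA : F ⊆ A)
    (hd : Deg1 F) {i₀ i j₀ : V}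
    (ha : (i₀, j₀) ∈ A) (hi : (i, j₀) ∈ A) (hne : i ≠ i₀)
    (hICi : ¬ Relation.TransGen (Adj A) i₀ i)
    (hmem : (i₀, j₀) ∈ F)
    {v : Finset V → ℝ} (hsa : Superadditive v) :
    marg v (insert (i, j₀) (F.erase (i₀, j₀))) i₀ ≤ marg v F i₀ := by
  set E := F.erase (i₀, j₀) with hE
  set F' := insert (i, j₀) E with hF'def
  have hEF : E ⊆ F := Finset.erase_subset _ _
  have hEA : E ⊆ A := hEF.trans hFA
  have hF'A : F' ⊆ A := Finset.insert_subset hi hEA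
  have hFins : F = insert (i₀, j₀) E := (Finset.insert_erase hmem).symm
  -- i₀ cannot reach i in F'
  have hnoF'i : ¬ Relation.ReflTransGen (Adj F') i₀ i := by
    intro h
    rcases Relation.ReflTransGen.cases_head h with h1 | ⟨c, hc, hcx⟩
    · exact hne h1.symm
    · exact hICi (Relation.TransGen.mono (fun _ _ hab => hF'A hab) _ _ (Relation.TransGen.head' hc hcx))
  -- nobody can reach back across arcs of A
  have hnoFj₀i₀ : ¬ Relation.ReflTransGen (Adj F) j₀ i₀ := no_rtg_back hA hFA ha
  have hnoF'j₀i : ¬ Relation.ReflTransGen (Adj F') j₀ i := no_rtg_back hA hF'A hi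
  -- (c) S_{F'}(i₀) = S_E(i₀)
  have hc : succSet F' i₀ = succSet E i₀ := succSet_insert_eq (a := (i, j₀)) hnoF'i
  -- (a) S_F(j₀) = S_E(j₀)
  have haj : succSet F j₀ = succSet E j₀ := by
    rw [hFins]
    exact succSet_insert_eq (a := (i₀, j₀)) (by rw [← hFins]; exact hnoFj₀i₀)
  -- (d) S_F(i₀) = S_E(i₀) ∪ S_E(j₀)
  have hdu : succSet F i₀ = succSet E i₀ ∪ succSet E j₀ := by
    ext x
    simp only [succSet, Finset.mem_union, Finset.mem_filter, Finset.mem_univ, true_and]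
    constructor
    · intro h
      rw [hFins] at h
      exact rtg_split (a := (i₀, j₀)) h
    · rintro (h | h)
      · exact Relation.ReflTransGen.mono (fun _ _ hab => hEF hab) _ _ h
      · exact Relation.ReflTransGen.head hmem (Relation.ReflTransGen.mono (fun _ _ hab => hEF hab) _ _ h)
  -- (e) disjointness
  have hdisj : Disjoint (succSet E i₀) (succSet E j₀) := by
    rw [Finset.disjoint_left]
    intro x hx hx'
    simp only [succSet, Finset.mem_filter, Finset.mem_univ, true_and] at hx hx'
    have hdE : Deg1 E := deg1_subset hEF hd
    rcases rtg_comparable hdE hx hx' with h | h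
    · -- RTG E i₀ j₀ : impossible since j₀ has no parent in E
      rcases Relation.ReflTransGen.cases_tail h with h1 | ⟨c, _, hcj⟩
      · -- j₀ = i₀ : loop in A
        exact hA j₀ (Relation.TransGen.single (show ((j₀ : V), j₀) ∈ A from h1 ▸ ha))
      · have : c = i₀ := hd (hEF hcj) hmem
        subst this
        exact (Finset.mem_erase.mp hcj).1 rfl
    · exact hnoFj₀i₀ (Relation.ReflTransGen.mono (fun _ _ hab => hEF hab) _ _ h)
  -- (f) immediate successors
  have hj₀notin : j₀ ∉ immSucc F' i₀ := by
    simp only [immSucc, Finset.mem_filter, Finset.mem_univ, true_and]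
    intro h
    rcases Finset.mem_insert.mp h with h1 | h1
    · exact hne (congrArg Prod.fst h1).symm
    · exact (Finset.mem_erase.mp h1).1 rfl
  have himm : immSucc F i₀ = insert j₀ (immSucc F' i₀) := by
    ext j
    simp only [immSucc, Finset.mem_filter, Finset.mem_univ, true_and, Finset.mem_insert]
    constructor
    · intro h
      by_cases hj : j = j₀
      · exact Or.inl hj
      · refine Or.inr (Finset.mem_insert_of_mem (Finset.mem_erase.mpr ⟨?_, h⟩))
        intro hh; exact hj (congrArg Prod.snd hh)
    · rintro (rfl | h)
      · exact hmem
      · rcases Finset.mem_insert.mp h with h1 | h1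
        · exact absurd (congrArg Prod.fst h1).symm hne
        · exact hEF h1
  -- (g) successor sets of other children agree
  have hg : ∀ j ∈ immSucc F' i₀, succSet F j = succSet F' j := by
    intro j hj
    simp only [immSucc, Finset.mem_filter, Finset.mem_univ, true_and] at hj
    have hjE : (i₀, j) ∈ E := by
      rcases Finset.mem_insert.mp hj with h1 | h1
      · exact absurd (congrArg Prod.fst h1).symm hne
      · exact h1
    have hjF : (i₀, j) ∈ F := hEF hjE
    have h1 : succSet F j = succSet E j := by
      rw [hFins]
      refine succSet_insert_eq (a := (i₀, j₀)) ?_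
      rw [← hFins]
      exact no_rtg_back hA hFA (hFA hjF)
    have h2 : succSet F' j = succSet E j := by
      refine succSet_insert_eq (a := (i, j₀)) ?_
      intro h
      exact hICi (Relation.TransGen.head' (hFA hjF) (Relation.ReflTransGen.mono (fun _ _ hab => hF'A hab) _ _ h))
    rw [h1, h2]
  -- assemble
  unfold marg
  rw [himm, Finset.sum_insert hj₀notin, haj, hc, hdu]
  rw [show (∑ x ∈ immSucc F' i₀, v (succSet F x)) = ∑ x ∈ immSucc F' i₀, v (succSet F' x)
    from Finset.sum_congr rfl fun j hj => congrArg v (hg j hj)]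
  have hsup := hsa (succSet E i₀) (succSet E j₀) hdisj
  linarith

lemma exists_maxForest_mem {A : Finset (V × V)} (hA : CircuitFree A)
    {a : V × V} (ha : a ∈ A) : ∃ M ∈ maxForests A, a ∈ M := by
  have hsub : {a} ⊆ A := Finset.singleton_subset_iff.mpr ha
  have hforest : IsForest ({a} : Finset (V × V)) := by
    refine isForest_of_deg1_acyc ?_ (acyc_of_subset hA hsub)
    intro x y j hx hy
    rw [Finset.mem_singleton] at hx hy
    have := hx.trans hy.symm
    exact congrArg Prod.fst this
  obtain ⟨M, hM, hsubM⟩ := exists_maxForest_extending (A := A) (A \ {a}).card {a}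
    le_rfl hsub hforest
  exact ⟨M, hM, hsubM (Finset.mem_singleton_self a)⟩

lemma maxForests_erase_eq {A : Finset (V × V)} (hA : CircuitFree A)
    {i₀ j₀ : V} (ha : (i₀, j₀) ∈ A) (hdeg : 2 ≤ inDeg A j₀) :
    maxForests (A.erase (i₀, j₀)) =
      (maxForests A).filter (fun F => (i₀, j₀) ∉ F) := by
  have hAe : CircuitFree (A.erase (i₀, j₀)) := fun i hi =>
    hA i (Relation.TransGen.mono (fun _ _ hab => Finset.mem_of_mem_erase hab) _ _ hi)
  -- second in-arc of j₀
  obtain ⟨x₁, hx₁A, hx₁ne⟩ : ∃ x₁, (x₁, j₀) ∈ A ∧ x₁ ≠ i₀ := by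
    have h2 : 1 < (A.filter (fun a => a.2 = j₀)).card := hdeg
    obtain ⟨p, hp, q, hq, hpq⟩ := Finset.one_lt_card.mp h2
    simp only [Finset.mem_filter] at hp hq
    by_cases hcase : p = (i₀, j₀)
    · refine ⟨q.1, ?_, ?_⟩
      · have : (q.1, q.2) ∈ A := hq.1
        rwa [hq.2] at this
      · intro h
        exact hpq (hcase.trans (Prod.ext h hq.2).symm)
    · refine ⟨p.1, ?_, ?_⟩
      · have : (p.1, p.2) ∈ A := hp.1
        rwa [hp.2] at this
      · intro h
        exact hcase (Prod.ext h hp.2)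
  ext F
  simp only [Finset.mem_filter]
  constructor
  · intro hF
    have hFA : F ⊆ A := (maxF_subset hF).trans (Finset.erase_subset _ _)
    have hnomem : (i₀, j₀) ∉ F := fun h =>
      (Finset.mem_erase.mp (maxF_subset hF h)).1 rfl
    refine ⟨?_, hnomem⟩
    rw [mem_maxForests_iff, maxSpanningForest_iff hA hFA (maxF_forest hF)]
    intro j x hxj
    by_cases hj : j = j₀
    · subst hj
      exact maxF_cover hAe hF (Finset.mem_erase.mpr
        ⟨fun h => hx₁ne (congrArg Prod.fst h), hx₁A⟩)
    · refine maxF_cover hAe hF (Finset.mem_erase.mpr ⟨?_, hxj⟩)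
      intro h; exact hj (congrArg Prod.snd h)
  · rintro ⟨hF, hnomem⟩
    have hFA : F ⊆ A.erase (i₀, j₀) := fun b hb => Finset.mem_erase.mpr
      ⟨fun h => hnomem (h ▸ hb), maxF_subset hF hb⟩
    rw [mem_maxForests_iff, maxSpanningForest_iff hAe hFA (maxF_forest hF)]
    intro j x hxj
    exact maxF_cover hA hF (Finset.mem_of_mem_erase hxj)

end Dev


/-- direct subordinate reduction effect: if `(i₀, j₀)` is an arc with
`δ⁻(j₀) ≥ 2`, `i₀` is not a predecessor of any other immediate predecessor of `j₀`, and
`v` is superadditive, then deleting `(i₀, j₀)` does not increase the AF value of `i₀`. -/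
theorem AF_direct_subordinate_reduction {V : Type*} [Fintype V] [DecidableEq V]
    (A : Finset (V × V)) (hA : CircuitFree A)
    (v : Finset V → ℝ) (hv0 : v ∅ = 0) (hsa : Superadditive v)
    (i₀ j₀ : V) (ha : (i₀, j₀) ∈ A) (hdeg : 2 ≤ inDeg A j₀)
    (hIC : ∀ i : V, (i, j₀) ∈ A → i ≠ i₀ → ¬ Relation.TransGen (Adj A) i₀ i) :
    AF v (A.erase (i₀, j₀)) i₀ ≤ AF v A i₀ := by
  classical
  set a₀ : V × V := (i₀, j₀) with ha₀
  set P : Finset (V × V) := A.filter (fun a => a.2 = j₀) with hP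
  set T : V × V → Finset (Finset (V × V)) :=
    fun p => (maxForests A).filter (fun F => p ∈ F) with hT
  have ha₀P : a₀ ∈ P := Finset.mem_filter.mpr ⟨ha, rfl⟩
  -- pairwise disjointness of the fibers
  have hdisjT : ∀ p ∈ P, ∀ q ∈ P, p ≠ q → Disjoint (T p) (T q) := by
    intro p hp q hq hpq
    rw [Finset.disjoint_left]
    intro F hFp hFq
    rw [hT] at hFp hFq
    simp only [Finset.mem_filter] at hFp hFq
    apply hpq
    have hp2 : p.2 = j₀ := (Finset.mem_filter.mp hp).2
    have hq2 : q.2 = j₀ := (Finset.mem_filter.mp hq).2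
    have hd := (maxF_forest hFp.1).deg1
    have hpmem : (p.1, j₀) ∈ F := by rw [← hp2]; exact hFp.2
    have hqmem : (q.1, j₀) ∈ F := by rw [← hq2]; exact hFq.2
    exact Prod.ext (hd hpmem hqmem) (hp2.trans hq2.symm)
  -- partition of maxForests A
  have hpart : maxForests A = P.biUnion T := by
    ext F
    simp only [Finset.mem_biUnion, hT, Finset.mem_filter]
    constructor
    · intro hF
      obtain ⟨y, hy⟩ := maxF_cover hA hF ha
      exact ⟨(y, j₀), Finset.mem_filter.mpr ⟨maxF_subset hF hy, rfl⟩, hF, hy⟩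
    · rintro ⟨p, _, hF, _⟩; exact hF
  -- partition of maxForests of the reduced digraph
  have hpart' : maxForests (A.erase a₀) = (P.erase a₀).biUnion T := by
    rw [maxForests_erase_eq hA ha hdeg]
    ext F
    simp only [Finset.mem_biUnion, hT, Finset.mem_filter, Finset.mem_erase]
    constructor
    · rintro ⟨hF, hnomem⟩
      obtain ⟨y, hy⟩ := maxF_cover hA hF ha
      refine ⟨(y, j₀), ⟨?_, Finset.mem_filter.mpr ⟨maxF_subset hF hy, rfl⟩⟩, hF, hy⟩
      intro h; rw [h] at hy; exact hnomem hy
    · rintro ⟨p, ⟨hpne, hpP⟩, hF, hpF⟩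
      refine ⟨hF, fun hmem => hpne ?_⟩
      have hp2 : p.2 = j₀ := (Finset.mem_filter.mp hpP).2
      have hd := (maxF_forest hF).deg1
      have hpmem : (p.1, j₀) ∈ F := by rw [← hp2]; exact hpF
      exact Prod.ext (hd hpmem hmem) hp2
  -- the swap bijection: for every p ∈ P, the fiber has the same sum bound and card
  have hswap : ∀ p ∈ P, p ≠ a₀ →
      (T p).card = (T a₀).card ∧
      (∑ F ∈ T p, marg v F i₀) ≤ ∑ F ∈ T a₀, marg v F i₀ := by
    rintro ⟨x, j⟩ hpP hpne
    have hj : j₀ = j := ((Finset.mem_filter.mp hpP).2).symm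
    subst hj
    have hxA : (x, j₀) ∈ A := (Finset.mem_filter.mp hpP).1
    have hxne : x ≠ i₀ := fun h => hpne (by rw [ha₀, h])
    -- maps
    set σ : Finset (V × V) → Finset (V × V) :=
      fun F => insert (x, j₀) (F.erase a₀) with hσ
    set τ : Finset (V × V) → Finset (V × V) :=
      fun F => insert a₀ (F.erase (x, j₀)) with hτ
    have hσmem : ∀ F ∈ T a₀, σ F ∈ T (x, j₀) := by
      intro F hF
      rw [hT, Finset.mem_filter] at hF ⊢
      exact ⟨swap_mem_maxForests hA hxA hF.1 hF.2 (Ne.symm hxne),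
        Finset.mem_insert_self _ _⟩
    have hτmem : ∀ F ∈ T (x, j₀), τ F ∈ T a₀ := by
      intro F hF
      rw [hT, Finset.mem_filter] at hF ⊢
      exact ⟨swap_mem_maxForests hA ha hF.1 hF.2 hxne, Finset.mem_insert_self _ _⟩
    have hτσ : ∀ F ∈ T a₀, τ (σ F) = F := by
      intro F hF
      rw [hT, Finset.mem_filter] at hF
      have hd := (maxF_forest hF.1).deg1
      have hxnotin : (x, j₀) ∉ F.erase a₀ := by
        intro h
        exact hxne (hd (Finset.mem_of_mem_erase h) hF.2)
      rw [hτ, hσ]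
      simp only
      rw [Finset.erase_insert hxnotin, Finset.insert_erase hF.2]
    have hστ : ∀ F ∈ T (x, j₀), σ (τ F) = F := by
      intro F hF
      rw [hT, Finset.mem_filter] at hF
      have hd := (maxF_forest hF.1).deg1
      have ha₀notin : a₀ ∉ F.erase (x, j₀) := by
        intro h
        exact hxne (hd hF.2 (Finset.mem_of_mem_erase h))
      rw [hσ, hτ]
      simp only
      rw [Finset.erase_insert ha₀notin, Finset.insert_erase hF.2]
    constructor
    · exact Finset.card_bij' (fun F _ => τ F) (fun F _ => σ F) hτmem hσmem hστ hτσ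
    · have hsum : (∑ F ∈ T (x, j₀), marg v F i₀) = ∑ F ∈ T a₀, marg v (σ F) i₀ := by
        refine Finset.sum_nbij' τ σ hτmem hσmem hστ hτσ ?_
        intro F hF
        rw [hστ F hF]
      rw [hsum]
      refine Finset.sum_le_sum ?_
      intro F hF
      rw [hT, Finset.mem_filter] at hF
      exact swap_marg_le hA (maxF_subset hF.1) (maxF_forest hF.1).deg1 ha hxA hxne
        (hIC x hxA hxne) hF.2 hsa
  -- nonemptiness of the fiber of a₀
  have hT₀ne : 0 < (T a₀).card := by
    obtain ⟨M, hM, hmemM⟩ := exists_maxForest_mem hA ha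
    exact Finset.card_pos.mpr ⟨M, by rw [hT]; exact Finset.mem_filter.mpr ⟨hM, hmemM⟩⟩
  set m : ℕ := (T a₀).card with hm
  set k : ℕ := P.card with hk
  have hk2 : 2 ≤ k := hdeg
  -- cardinalities
  have hcardsame : ∀ p ∈ P, (T p).card = m := by
    intro p hp
    by_cases hpe : p = a₀
    · rw [hpe]
    · exact (hswap p hp hpe).1
  have hcardA : (maxForests A).card = k * m := by
    rw [hpart, Finset.card_biUnion hdisjT]
    rw [Finset.sum_congr rfl hcardsame, Finset.sum_const, smul_eq_mul]
  have hcardE : (maxForests (A.erase a₀)).card = (k - 1) * m := by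
    rw [hpart', Finset.card_biUnion (fun p hp q hq hpq =>
      hdisjT p (Finset.mem_of_mem_erase hp) q (Finset.mem_of_mem_erase hq) hpq)]
    rw [Finset.sum_congr rfl (fun p hp => hcardsame p (Finset.mem_of_mem_erase hp)),
      Finset.sum_const, smul_eq_mul, Finset.card_erase_of_mem ha₀P]
  -- sums
  set s₀ : ℝ := ∑ F ∈ T a₀, marg v F i₀ with hs₀
  set S' : ℝ := ∑ p ∈ P.erase a₀, ∑ F ∈ T p, marg v F i₀ with hS'
  have hsumA : (∑ F ∈ maxForests A, marg v F i₀) = s₀ + S' := by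
    rw [hpart, Finset.sum_biUnion hdisjT]
    rw [← Finset.sum_erase_add _ _ ha₀P, add_comm]
  have hsumE : (∑ F ∈ maxForests (A.erase a₀), marg v F i₀) = S' := by
    rw [hpart', Finset.sum_biUnion (fun p hp q hq hpq =>
      hdisjT p (Finset.mem_of_mem_erase hp) q (Finset.mem_of_mem_erase hq) hpq)]
  have hS'le : S' ≤ ((k : ℝ) - 1) * s₀ := by
    have : S' ≤ ∑ _p ∈ P.erase a₀, s₀ := by
      refine Finset.sum_le_sum ?_
      intro p hp
      exact (hswap p (Finset.mem_of_mem_erase hp) (Finset.mem_erase.mp hp).1).2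
    rw [Finset.sum_const, Finset.card_erase_of_mem ha₀P, nsmul_eq_mul] at this
    refine this.trans (le_of_eq ?_)
    congr 1
    rw [← hk]
    have : (1 : ℕ) ≤ k := by omega
    push_cast [Nat.cast_sub this]
    ring
  -- final arithmetic
  unfold AF
  rw [hsumA, hsumE, hcardA, hcardE]
  have hmpos : (0 : ℝ) < m := by exact_mod_cast hT₀ne
  have h1pos : (0 : ℝ) < (((k - 1) * m : ℕ) : ℝ) := by
    exact_mod_cast Nat.mul_pos (by omega) hT₀ne
  have h2pos : (0 : ℝ) < ((k * m : ℕ) : ℝ) := by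
    exact_mod_cast Nat.mul_pos (by omega) hT₀ne
  rw [div_le_div_iff₀ h1pos h2pos]
  have hkm : ((k * m : ℕ) : ℝ) = (k : ℝ) * m := by push_cast; ring
  have hkm' : (((k - 1) * m : ℕ) : ℝ) = ((k : ℝ) - 1) * m := by
    have h1 : (1 : ℕ) ≤ k := by omega
    push_cast [Nat.cast_sub h1]
    ring
  rw [hkm, hkm']
  have hkey : (0 : ℝ) ≤ (m : ℝ) * (((k : ℝ) - 1) * s₀ - S') :=
    mul_nonneg hmpos.le (by linarith)
  nlinarith
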